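/- Vanishing effect of the perturbation on the free energy: In the general perturbed Bayesian inference model, if s_n → 0 as n → ∞, then |F_n − F_n^{(pert)}(a)| → 0 uniformly in a ∈ [1/2, 3], and consequently |F_n − ∫₁² F_n^{(pert)}(a) da| → 0. -/

import Mathlib

open MeasureTheory ProbabilityTheory Filter Real
open scoped Topology

noncomputable section

/-- Standard Gaussian measure on `ℝ`. -/
def stdG : Measure ℝ := gaussianReal 0 1

/-- Law of a vector of `n` i.i.d. standard Gaussians. -/
def gvec (n : ℕ) : Measure (Fin n → ℝ) := Measure.pi fun _ => stdG

/-- Rescaled scalar product `x·y = (1/n)·Σᵢ xᵢyᵢ`. -/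
def ovl (n : ℕ) (x y : Fin n → ℝ) : ℝ := (1 / (n : ℝ)) * ∑ i, x i * y i

/-- Perturbation Hamiltonian
`h_{n,a}(x) = Σᵢ a√sₙ·zᵢ·xᵢ + a²sₙ·xᵢ·Xᵢ − a²sₙ·xᵢ²/2`. -/
def hPert (n : ℕ) (sn a : ℝ) (X z x : Fin n → ℝ) : ℝ :=
  ∑ i : Fin n,
    (a * Real.sqrt sn * z i * x i + a ^ 2 * sn * x i * X i - a ^ 2 * sn * x i ^ 2 / 2)

/-- Joint law of `((X,Y),z)` where `z` is an independent Gaussian vector. -/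
def pertSpace {𝒴 : Type*} [MeasurableSpace 𝒴] (n : ℕ)
    (ν : Measure ((Fin n → ℝ) × 𝒴)) [IsProbabilityMeasure ν] :
    Measure (((Fin n → ℝ) × 𝒴) × (Fin n → ℝ)) :=
  ν.prod (gvec n)

/-- Perturbed partition function
`∫ W(x,Y)·e^{h_{n,a}(x)} dP₁(x)` (where `W(x,y) = e^{H_n(x,y)}`). -/
def Zpert {𝒴 : Type*} [MeasurableSpace 𝒴] (n : ℕ) (P : Measure (Fin n → ℝ))
    (W : (Fin n → ℝ) → 𝒴 → ℝ) (sn a : ℝ)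
    (ω : ((Fin n → ℝ) × 𝒴) × (Fin n → ℝ)) : ℝ :=
  ∫ x, W x ω.1.2 * Real.exp (hPert n sn a ω.1.1 ω.2 x) ∂P

/-- Unperturbed free energy `F_n = (1/n)·E[log Z_n(Y)]`. -/
def FEgen {𝒴 : Type*} [MeasurableSpace 𝒴] (n : ℕ) (P : Measure (Fin n → ℝ))
    (W : (Fin n → ℝ) → 𝒴 → ℝ) (ν : Measure ((Fin n → ℝ) × 𝒴)) : ℝ :=
  (1 / (n : ℝ)) * ∫ y, Real.log (∫ x, W x y ∂P) ∂(ν.map Prod.snd)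

/-- Perturbed free energy `F_n^{(pert)}(a)`. -/
def FEpert {𝒴 : Type*} [MeasurableSpace 𝒴] (n : ℕ) (P : Measure (Fin n → ℝ))
    (W : (Fin n → ℝ) → 𝒴 → ℝ) (ν : Measure ((Fin n → ℝ) × 𝒴)) [IsProbabilityMeasure ν]
    (sn a : ℝ) : ℝ :=
  (1 / (n : ℝ)) * ∫ ω, Real.log (Zpert n P W sn a ω) ∂(pertSpace n ν)

/-- Perturbed Gibbs expectation `⟨f(x)⟩`. -/
def gibbsPert {𝒴 : Type*} [MeasurableSpace 𝒴] (n : ℕ) (P : Measure (Fin n → ℝ))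
    (W : (Fin n → ℝ) → 𝒴 → ℝ) (sn a : ℝ)
    (ω : ((Fin n → ℝ) × 𝒴) × (Fin n → ℝ)) (f : (Fin n → ℝ) → ℝ) : ℝ :=
  (∫ x, f x * (W x ω.1.2 * Real.exp (hPert n sn a ω.1.1 ω.2 x)) ∂P)
    / Zpert n P W sn a ω

/-- The function `φ(a) = (1/(n·sₙ))·log ∫ e^{H^{(pert)}} dP₁`. -/
def phiPert {𝒴 : Type*} [MeasurableSpace 𝒴] (n : ℕ) (P : Measure (Fin n → ℝ))
    (W : (Fin n → ℝ) → 𝒴 → ℝ) (sn a : ℝ)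
    (ω : ((Fin n → ℝ) × 𝒴) × (Fin n → ℝ)) : ℝ :=
  (1 / ((n : ℝ) * sn)) * Real.log (Zpert n P W sn a ω)

/-- `v_n(s_n) = sup_{1/2 ≤ a ≤ 3} E|φ(a) − E φ(a)|`. -/
def vnPert {𝒴 : Type*} [MeasurableSpace 𝒴] (n : ℕ) (P : Measure (Fin n → ℝ))
    (W : (Fin n → ℝ) → 𝒴 → ℝ) (ν : Measure ((Fin n → ℝ) × 𝒴)) [IsProbabilityMeasure ν]
    (sn : ℝ) : ℝ :=
  ⨆ a : Set.Icc (1 / 2 : ℝ) 3,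
    ∫ ω, |phiPert n P W sn a ω - ∫ ω', phiPert n P W sn a ω' ∂(pertSpace n ν)|
      ∂(pertSpace n ν)

/-- `E⟨x⁽¹⁾·x⁽²⁾⟩` under the perturbed Gibbs measure. -/
def meanOv {𝒴 : Type*} [MeasurableSpace 𝒴] (n : ℕ) (P : Measure (Fin n → ℝ))
    (W : (Fin n → ℝ) → 𝒴 → ℝ) (ν : Measure ((Fin n → ℝ) × 𝒴)) [IsProbabilityMeasure ν]
    (sn a : ℝ) : ℝ :=
  ∫ ω, gibbsPert n P W sn a ω
      (fun x1 => gibbsPert n P W sn a ω (fun x2 => ovl n x1 x2)) ∂(pertSpace n ν)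

set_option maxHeartbeats 1000000
instance : IsProbabilityMeasure stdG := by unfold stdG; infer_instance
instance (n : ℕ) : IsProbabilityMeasure (gvec n) := by unfold gvec; infer_instance

lemma integrable_abs_stdG : Integrable (fun t : ℝ => |t|) stdG := by
  have h1 : Integrable (fun x : ℝ => x ^ (1:ℝ) * Real.exp (-(1/2) * x ^ 2)) :=
    integrable_rpow_mul_exp_neg_mul_sq (by norm_num) (by norm_num)
  have h2 : Integrable (fun x : ℝ => x * Real.exp (-(1/2) * x ^ 2)) := by
    simpa using h1
  have h3 := h2.abs
  rw [stdG, gaussianReal_of_var_ne_zero 0 one_ne_zero,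
    integrable_withDensity_iff (measurable_gaussianPDF 0 1)
      (Filter.Eventually.of_forall fun x => ENNReal.ofReal_lt_top)]
  have h4 := (h3.const_mul ((Real.sqrt (2 * Real.pi))⁻¹))
  apply h4.congr
  filter_upwards with x
  rw [gaussianPDF, ENNReal.toReal_ofReal (gaussianPDFReal_nonneg 0 1 x), gaussianPDFReal]
  rw [abs_mul, abs_of_nonneg (Real.exp_pos _).le]
  push_cast
  ring_nf

lemma pi_map_eval (n : ℕ) (i : Fin n) : (gvec n).map (fun z => z i) = stdG := by
  ext s hs
  rw [Measure.map_apply (measurable_pi_apply i) hs]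
  have : (fun z : Fin n → ℝ => z i) ⁻¹' s
      = Set.pi Set.univ (Function.update (fun _ : Fin n => (Set.univ : Set ℝ)) i s) := by
    ext x
    simp only [Set.mem_preimage, Set.mem_pi, Set.mem_univ, forall_true_left]
    constructor
    · intro hx j
      rcases eq_or_ne j i with rfl | hj
      · simpa using hx
      · simp [Function.update_of_ne hj]
    · intro hx; simpa using hx i
  rw [gvec, this, Measure.pi_pi]
  rw [Finset.prod_eq_single i (fun j _ hj => by simp [Function.update_of_ne hj]) (by simp)]
  simp

def Mabs : ℝ := ∫ t, |t| ∂stdG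

lemma Mabs_nonneg : 0 ≤ Mabs := integral_nonneg fun t => abs_nonneg t

lemma integrable_sum_abs (n : ℕ) :
    Integrable (fun z : Fin n → ℝ => ∑ i, |z i|) (gvec n) := by
  apply integrable_finset_sum
  intro i _
  have hm : AEStronglyMeasurable (fun t : ℝ => |t|) ((gvec n).map (fun z => z i)) :=
    (_root_.continuous_abs.measurable).aestronglyMeasurable
  have : Integrable (fun t : ℝ => |t|) ((gvec n).map (fun z => z i)) := by
    rw [pi_map_eval]; exact integrable_abs_stdG
  exact (integrable_map_measure hm (measurable_pi_apply i).aemeasurable).mp this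

lemma integral_sum_abs (n : ℕ) :
    ∫ z, (∑ i, |z i|) ∂(gvec n) = n * Mabs := by
  rw [integral_finset_sum _ (fun i _ => by
    have hm : AEStronglyMeasurable (fun t : ℝ => |t|) ((gvec n).map (fun z => z i)) :=
      (_root_.continuous_abs.measurable).aestronglyMeasurable
    have : Integrable (fun t : ℝ => |t|) ((gvec n).map (fun z => z i)) := by
      rw [pi_map_eval]; exact integrable_abs_stdG
    exact (integrable_map_measure hm (measurable_pi_apply i).aemeasurable).mp this)]
  have : ∀ i : Fin n, ∫ z, |z i| ∂(gvec n) = Mabs := by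
    intro i
    have hm : AEStronglyMeasurable (fun t : ℝ => |t|) ((gvec n).map (fun z => z i)) :=
      (_root_.continuous_abs.measurable).aestronglyMeasurable
    rw [Mabs, ← pi_map_eval n i, integral_map (measurable_pi_apply i).aemeasurable hm]
  simp [this, Finset.sum_const, Mabs, mul_comm]

instance {𝒴 : Type*} [MeasurableSpace 𝒴] (n : ℕ)
    (ν : Measure ((Fin n → ℝ) × 𝒴)) [IsProbabilityMeasure ν] :
    IsProbabilityMeasure (pertSpace n ν) := by unfold pertSpace; infer_instance

lemma meas_hPert (n : ℕ) (sn : ℝ) :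
    Measurable (fun p : ℝ × ((Fin n → ℝ) × (Fin n → ℝ) × (Fin n → ℝ)) =>
      hPert n sn p.1 p.2.1 p.2.2.1 p.2.2.2) := by
  unfold hPert
  apply Finset.measurable_sum
  intro i _
  fun_prop

section Meas
variable {𝒴 : Type*} [MeasurableSpace 𝒴] (n : ℕ) (P : Measure (Fin n → ℝ))
  [IsProbabilityMeasure P] (W : (Fin n → ℝ) → 𝒴 → ℝ)
  (hWmeas : Measurable fun p : (Fin n → ℝ) × 𝒴 => W p.1 p.2) (sn : ℝ)

include hWmeas

lemma meas_Zpert_joint :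
    Measurable (fun q : ℝ × (((Fin n → ℝ) × 𝒴) × (Fin n → ℝ)) =>
      Zpert n P W sn q.1 q.2) := by
  have hF : Measurable (fun r : (ℝ × (((Fin n → ℝ) × 𝒴) × (Fin n → ℝ))) × (Fin n → ℝ) =>
      W r.2 r.1.2.1.2 * Real.exp (hPert n sn r.1.1 r.1.2.1.1 r.1.2.2 r.2)) := by
    apply Measurable.mul
    · exact hWmeas.comp (measurable_snd.prodMk
        (measurable_fst.snd.fst.snd))
    · exact Real.measurable_exp.comp ((meas_hPert n sn).comp
        (measurable_fst.fst.prodMk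
          ((measurable_fst.snd.fst.fst).prodMk
            ((measurable_fst.snd.snd).prodMk measurable_snd))))
  exact hF.stronglyMeasurable.integral_prod_right'.measurable

lemma meas_Zpert (a : ℝ) :
    Measurable (fun ω : ((Fin n → ℝ) × 𝒴) × (Fin n → ℝ) => Zpert n P W sn a ω) :=
  (meas_Zpert_joint n P W hWmeas sn).comp (measurable_const.prodMk measurable_id)

end Meas

lemma hPert_abs_le (n : ℕ) {sn a K₁ : ℝ} (hsn0 : 0 ≤ sn) (hK : 0 ≤ K₁)
    (ha : a ∈ Set.Icc (1/2 : ℝ) 3) {X z x : Fin n → ℝ}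
    (hX : ∀ i, |X i| ≤ K₁) (hx : ∀ i, |x i| ≤ K₁) :
    |hPert n sn a X z x|
      ≤ 3 * Real.sqrt sn * K₁ * (∑ i, |z i|) + n * ((27/2) * sn * K₁ ^ 2) := by
  have ha3 : |a| ≤ 3 := abs_le.mpr ⟨by linarith [ha.1], ha.2⟩
  have ha2 : a ^ 2 ≤ 9 := by nlinarith [ha.1, ha.2]
  have key : ∀ i : Fin n,
      |a * Real.sqrt sn * z i * x i + a ^ 2 * sn * x i * X i - a ^ 2 * sn * x i ^ 2 / 2|
        ≤ 3 * Real.sqrt sn * K₁ * |z i| + (27/2) * sn * K₁ ^ 2 := by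
    intro i
    have h1 : |a * Real.sqrt sn * z i * x i| ≤ 3 * Real.sqrt sn * |z i| * K₁ := by
      rw [abs_mul, abs_mul, abs_mul, abs_of_nonneg (Real.sqrt_nonneg sn)]
      gcongr <;> first | exact ha3 | exact hx i
    have h2 : |a ^ 2 * sn * x i * X i| ≤ 9 * sn * K₁ * K₁ := by
      rw [abs_mul, abs_mul, abs_mul, abs_of_nonneg (sq_nonneg a), abs_of_nonneg hsn0]
      gcongr <;> first | exact ha2 | exact hx i | exact hX i
    have hx2 : x i ^ 2 ≤ K₁ ^ 2 := by
      rw [← sq_abs]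
      exact pow_le_pow_left₀ (abs_nonneg _) (hx i) 2
    have h3 : |a ^ 2 * sn * x i ^ 2 / 2| ≤ 9 * sn * K₁ ^ 2 / 2 := by
      rw [abs_of_nonneg (by positivity)]
      gcongr
    calc |a * Real.sqrt sn * z i * x i + a ^ 2 * sn * x i * X i - a ^ 2 * sn * x i ^ 2 / 2|
        ≤ |a * Real.sqrt sn * z i * x i| + |a ^ 2 * sn * x i * X i|
            + |a ^ 2 * sn * x i ^ 2 / 2| := by
          exact (abs_sub _ _).trans (by gcongr; exact abs_add_le _ _)
      _ ≤ 3 * Real.sqrt sn * |z i| * K₁ + 9 * sn * K₁ * K₁ + 9 * sn * K₁ ^ 2 / 2 := by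
          gcongr
      _ = 3 * Real.sqrt sn * K₁ * |z i| + (27/2) * sn * K₁ ^ 2 := by ring
  calc |hPert n sn a X z x|
      ≤ ∑ i, |a * Real.sqrt sn * z i * x i + a ^ 2 * sn * x i * X i
          - a ^ 2 * sn * x i ^ 2 / 2| := Finset.abs_sum_le_sum_abs _ _
    _ ≤ ∑ i : Fin n, (3 * Real.sqrt sn * K₁ * |z i| + (27/2) * sn * K₁ ^ 2) :=
        Finset.sum_le_sum fun i _ => key i
    _ = 3 * Real.sqrt sn * K₁ * (∑ i, |z i|) + n * ((27/2) * sn * K₁ ^ 2) := by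
        rw [Finset.sum_add_distrib, ← Finset.mul_sum, Finset.sum_const, Finset.card_univ]
        simp [nsmul_eq_mul]

lemma logZpert_sub_log_le {𝒴 : Type*} [MeasurableSpace 𝒴] (n : ℕ)
    (P : Measure (Fin n → ℝ)) [IsProbabilityMeasure P]
    (W : (Fin n → ℝ) → 𝒴 → ℝ)
    (hWmeas : Measurable fun p : (Fin n → ℝ) × 𝒴 => W p.1 p.2)
    (hWpos : ∀ x y, 0 ≤ W x y)
    {K₁ : ℝ} (hK : 0 ≤ K₁) (hsuppP : ∀ᵐ x ∂P, ∀ i, |x i| ≤ K₁)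
    {sn a : ℝ} (hsn : 0 ≤ sn) (ha : a ∈ Set.Icc (1/2 : ℝ) 3)
    (ω : ((Fin n → ℝ) × 𝒴) × (Fin n → ℝ)) (hX : ∀ i, |ω.1.1 i| ≤ K₁) :
    |Real.log (Zpert n P W sn a ω) - Real.log (∫ x, W x ω.1.2 ∂P)|
      ≤ 3 * Real.sqrt sn * K₁ * (∑ i, |ω.2 i|) + n * ((27/2) * sn * K₁ ^ 2) := by
  set B : ℝ := 3 * Real.sqrt sn * K₁ * (∑ i, |ω.2 i|) + n * ((27/2) * sn * K₁ ^ 2) with hBdef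
  have hB0 : 0 ≤ B := by
    have : (0:ℝ) ≤ ∑ i, |ω.2 i| := Finset.sum_nonneg fun i _ => abs_nonneg _
    positivity
  set f : (Fin n → ℝ) → ℝ := fun x => W x ω.1.2 with hfdef
  set g : (Fin n → ℝ) → ℝ := fun x => W x ω.1.2 * Real.exp (hPert n sn a ω.1.1 ω.2 x)
    with hgdef
  have hZ : Zpert n P W sn a ω = ∫ x, g x ∂P := rfl
  have hf0 : ∀ x, 0 ≤ f x := fun x => hWpos x _
  have hg0 : ∀ x, 0 ≤ g x := fun x => mul_nonneg (hWpos x _) (Real.exp_pos _).le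
  have hfmeas : Measurable f := hWmeas.comp (measurable_id.prodMk measurable_const)
  have hgmeas : Measurable g := by
    apply hfmeas.mul
    exact Real.measurable_exp.comp ((meas_hPert n sn).comp
      (measurable_const.prodMk (measurable_const.prodMk
        (measurable_const.prodMk measurable_id))))
  have hbounds : ∀ᵐ x ∂P, Real.exp (-B) * f x ≤ g x ∧ g x ≤ Real.exp B * f x := by
    filter_upwards [hsuppP] with x hx
    have hh := hPert_abs_le n hsn hK ha (z := ω.2) hX hx
    rw [← hBdef] at hh
    obtain ⟨hl, hu⟩ := abs_le.mp hh
    constructor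
    · calc Real.exp (-B) * f x = f x * Real.exp (-B) := mul_comm _ _
        _ ≤ f x * Real.exp (hPert n sn a ω.1.1 ω.2 x) := by
            exact mul_le_mul_of_nonneg_left (Real.exp_le_exp.mpr hl) (hf0 x)
        _ = g x := rfl
    · calc g x = f x * Real.exp (hPert n sn a ω.1.1 ω.2 x) := rfl
        _ ≤ f x * Real.exp B := mul_le_mul_of_nonneg_left (Real.exp_le_exp.mpr hu) (hf0 x)
        _ = Real.exp B * f x := mul_comm _ _
  rw [hZ]
  by_cases hfi : Integrable f P
  · by_cases hfpos : 0 < ∫ x, f x ∂P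
    · have hgi : Integrable g P := by
        refine (hfi.const_mul (Real.exp B)).mono' hgmeas.aestronglyMeasurable ?_
        filter_upwards [hbounds] with x hx
        rw [Real.norm_eq_abs, abs_of_nonneg (hg0 x)]
        exact hx.2
      have hle : ∫ x, g x ∂P ≤ Real.exp B * ∫ x, f x ∂P := by
        rw [← integral_const_mul]
        exact integral_mono_ae hgi (hfi.const_mul _) (by filter_upwards [hbounds] with x hx
          using hx.2)
      have hge : Real.exp (-B) * ∫ x, f x ∂P ≤ ∫ x, g x ∂P := by
        rw [← integral_const_mul]
        exact integral_mono_ae (hfi.const_mul _) hgi (by filter_upwards [hbounds] with x hx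
          using hx.1)
      have hgpos : 0 < ∫ x, g x ∂P :=
        lt_of_lt_of_le (by positivity) hge
      rw [abs_sub_le_iff]
      constructor
      · have := Real.log_le_log hgpos hle
        rw [Real.log_mul (Real.exp_ne_zero B) (ne_of_gt hfpos), Real.log_exp] at this
        linarith
      · have := Real.log_le_log (by positivity) hge
        rw [Real.log_mul (Real.exp_ne_zero (-B)) (ne_of_gt hfpos), Real.log_exp] at this
        linarith
    · have hint0 : ∫ x, f x ∂P = 0 :=
        le_antisymm (not_lt.mp hfpos) (integral_nonneg hf0)
      have hfz : f =ᵐ[P] 0 :=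
        (integral_eq_zero_iff_of_nonneg (fun x => hf0 x) hfi).mp hint0
      have hgz : g =ᵐ[P] 0 := by
        filter_upwards [hfz] with x hx
        simp only [hgdef, Pi.zero_apply] at hx ⊢
        rw [show W x ω.1.2 = f x from rfl, hx, zero_mul]
      have hgint0 : ∫ x, g x ∂P = 0 := by
        rw [integral_congr_ae hgz]; simp
      rw [hint0, hgint0]
      simpa using hB0
  · have hint0 : ∫ x, f x ∂P = 0 := integral_undef hfi
    have hgni : ¬ Integrable g P := by
      intro hg
      apply hfi
      refine (hg.const_mul (Real.exp B)).mono' hfmeas.aestronglyMeasurable ?_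
      filter_upwards [hbounds] with x hx
      rw [Real.norm_eq_abs, abs_of_nonneg (hf0 x)]
      calc f x = Real.exp B * (Real.exp (-B) * f x) := by
            rw [← mul_assoc, ← Real.exp_add, add_neg_cancel, Real.exp_zero, one_mul]
        _ ≤ Real.exp B * g x := mul_le_mul_of_nonneg_left hx.1 (Real.exp_pos _).le
    have hgint0 : ∫ x, g x ∂P = 0 := integral_undef hgni
    rw [hint0, hgint0]
    simpa using hB0

section KeyEst
variable {𝒴 : Type*} [MeasurableSpace 𝒴] (n : ℕ) (P : Measure (Fin n → ℝ))
  [IsProbabilityMeasure P] (W : (Fin n → ℝ) → 𝒴 → ℝ)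
  (ν : Measure ((Fin n → ℝ) × 𝒴)) [IsProbabilityMeasure ν]

lemma map_fst_pertSpace : (pertSpace n ν).map Prod.fst = ν := by
  rw [pertSpace, Measure.map_fst_prod]
  simp

lemma map_snd_pertSpace : (pertSpace n ν).map Prod.snd = gvec n := by
  rw [pertSpace, Measure.map_snd_prod]
  simp

lemma map_y_pertSpace : (pertSpace n ν).map (fun ω => ω.1.2) = ν.map Prod.snd := by
  have : (fun ω : ((Fin n → ℝ) × 𝒴) × (Fin n → ℝ) => ω.1.2) = Prod.snd ∘ Prod.fst := rfl
  rw [this, ← Measure.map_map measurable_snd measurable_fst, map_fst_pertSpace]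

variable (hWmeas : Measurable fun p : (Fin n → ℝ) × 𝒴 => W p.1 p.2)

include hWmeas in
lemma meas_logZ : Measurable (fun y : 𝒴 => Real.log (∫ x, W x y ∂P)) := by
  have : Measurable (fun y : 𝒴 => ∫ x, W x y ∂P) := by
    have hm : Measurable (fun q : 𝒴 × (Fin n → ℝ) => W q.2 q.1) :=
      hWmeas.comp (measurable_snd.prodMk measurable_fst)
    exact hm.stronglyMeasurable.integral_prod_right'.measurable
  exact Real.measurable_log.comp this

include hWmeas in
lemma key_est
    (hWpos : ∀ x y, 0 ≤ W x y)
    (hmarg : ν.map Prod.fst = P)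
    {K₁ : ℝ} (hK : 0 < K₁) (hsuppP : ∀ᵐ x ∂P, ∀ i, |x i| ≤ K₁)
    (hlogZint : Integrable (fun y => Real.log (∫ x, W x y ∂P)) (ν.map Prod.snd))
    {sn a : ℝ} (hsn : sn ∈ Set.Ioc (0:ℝ) 1) (ha : a ∈ Set.Icc (1/2 : ℝ) 3) :
    |FEgen n P W ν - FEpert n P W ν sn a|
      ≤ 3 * K₁ * Mabs * Real.sqrt sn + (27/2) * K₁ ^ 2 * sn := by
  have hMn : 0 ≤ Mabs := Mabs_nonneg
  have hrhs0 : 0 ≤ 3 * K₁ * Mabs * Real.sqrt sn + (27/2) * K₁ ^ 2 * sn := by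
    have := Real.sqrt_nonneg sn
    have := hsn.1.le
    positivity
  rcases Nat.eq_zero_or_pos n with hn | hn
  · subst hn
    simp only [FEgen, FEpert, Nat.cast_zero, div_zero, zero_mul]
    simpa using hrhs0
  have hnR : (0:ℝ) < n := by exact_mod_cast hn
  set μ := pertSpace n ν with hμ
  set L : ((Fin n → ℝ) × 𝒴) × (Fin n → ℝ) → ℝ :=
    fun ω => Real.log (∫ x, W x ω.1.2 ∂P) with hL
  set LP : ((Fin n → ℝ) × 𝒴) × (Fin n → ℝ) → ℝ :=
    fun ω => Real.log (Zpert n P W sn a ω) with hLP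
  set B : ((Fin n → ℝ) × 𝒴) × (Fin n → ℝ) → ℝ :=
    fun ω => 3 * Real.sqrt sn * K₁ * (∑ i, |ω.2 i|) + n * ((27/2) * sn * K₁ ^ 2) with hB
  -- a.e. support bound on X-coordinate
  have hsuppν : ∀ᵐ p ∂ν, ∀ i, |p.1 i| ≤ K₁ := by
    have := ae_of_ae_map (μ := ν) (f := Prod.fst) measurable_fst.aemeasurable
      (p := fun x : Fin n → ℝ => ∀ i, |x i| ≤ K₁) (by rw [hmarg]; exact hsuppP)
    exact this
  have hsuppμ : ∀ᵐ ω ∂μ, ∀ i, |ω.1.1 i| ≤ K₁ := by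
    have := ae_of_ae_map (μ := μ) (f := Prod.fst) measurable_fst.aemeasurable
      (p := fun q : (Fin n → ℝ) × 𝒴 => ∀ i, |q.1 i| ≤ K₁)
      (by rw [hμ, map_fst_pertSpace]; exact hsuppν)
    exact this
  -- pointwise bound
  have hpt : ∀ᵐ ω ∂μ, |LP ω - L ω| ≤ B ω := by
    filter_upwards [hsuppμ] with ω hω
    exact logZpert_sub_log_le n P W hWmeas hWpos hK.le hsuppP hsn.1.le ha ω hω
  -- measurability / integrability
  have hLmeas : Measurable L := (meas_logZ n P W hWmeas).comp (measurable_fst.snd)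
  have hLPmeas : Measurable LP :=
    Real.measurable_log.comp (meas_Zpert n P W hWmeas sn a)
  have hLint : Integrable L μ := by
    have := (integrable_map_measure (meas_logZ n P W hWmeas).aestronglyMeasurable
      (measurable_fst.snd.aemeasurable (μ := μ))).mp ?_
    · exact this
    · rw [show (Measure.map (fun ω : ((Fin n → ℝ) × 𝒴) × (Fin n → ℝ) => ω.1.2) μ)
          = ν.map Prod.snd from map_y_pertSpace n ν]
      exact hlogZint
  have hSint : Integrable (fun ω : ((Fin n → ℝ) × 𝒴) × (Fin n → ℝ) => ∑ i, |ω.2 i|) μ := by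
    have hm : Measurable (fun z : Fin n → ℝ => ∑ i, |z i|) := by
      apply Finset.measurable_sum
      intro i _
      exact (measurable_pi_apply i).abs
    have := (integrable_map_measure hm.aestronglyMeasurable
      (measurable_snd.aemeasurable (μ := μ))).mp ?_
    · exact this
    · rw [show Measure.map Prod.snd μ = gvec n from map_snd_pertSpace n ν]
      exact integrable_sum_abs n
  have hBint : Integrable B μ := by
    rw [hB]
    exact (hSint.const_mul _).add (integrable_const _)
  have hLPint : Integrable LP μ := by
    refine (hLint.abs.add hBint).mono' hLPmeas.aestronglyMeasurable ?_
    filter_upwards [hpt] with ω hω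
    rw [Real.norm_eq_abs]
    calc |LP ω| ≤ |LP ω - L ω| + |L ω| := by
          have h := abs_add_le (LP ω - L ω) (L ω)
          rw [sub_add_cancel] at h
          exact h
      _ ≤ |L ω| + B ω := by linarith
  -- FEgen as an integral over μ
  have hFE : FEgen n P W ν = (1 / (n:ℝ)) * ∫ ω, L ω ∂μ := by
    rw [FEgen, ← map_y_pertSpace n ν,
      integral_map (measurable_fst.snd.aemeasurable)
        (meas_logZ n P W hWmeas).aestronglyMeasurable]
  -- integral of B
  have hSB : ∫ ω, (∑ i, |ω.2 i|) ∂μ = n * Mabs := by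
    have hm : Measurable (fun z : Fin n → ℝ => ∑ i, |z i|) := by
      apply Finset.measurable_sum
      intro i _
      exact (measurable_pi_apply i).abs
    rw [← integral_sum_abs n, ← map_snd_pertSpace n ν,
      integral_map measurable_snd.aemeasurable hm.aestronglyMeasurable]
  have hBI : ∫ ω, B ω ∂μ
      = 3 * Real.sqrt sn * K₁ * (n * Mabs) + n * ((27/2) * sn * K₁ ^ 2) := by
    rw [hB]
    rw [integral_add (hSint.const_mul _) (integrable_const _), integral_const_mul, hSB,
      integral_const]
    simp
  -- main estimate
  have hdiff : |∫ ω, L ω ∂μ - ∫ ω, LP ω ∂μ| ≤ ∫ ω, B ω ∂μ := by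
    rw [← integral_sub hLint hLPint]
    have h1 : |∫ ω, (L ω - LP ω) ∂μ| ≤ ∫ ω, |L ω - LP ω| ∂μ := by
      simpa [Real.norm_eq_abs] using
        norm_integral_le_integral_norm (μ := μ) (fun ω => L ω - LP ω)
    refine h1.trans ?_
    calc (∫ ω, |L ω - LP ω| ∂μ)
      _ ≤ ∫ ω, B ω ∂μ := by
          refine integral_mono_ae (hLint.sub hLPint).abs hBint ?_
          filter_upwards [hpt] with ω hω
          rw [abs_sub_comm]
          exact hω
  rw [hFE, FEpert, ← hμ, show (∫ ω, Real.log (Zpert n P W sn a ω) ∂μ) = ∫ ω, LP ω ∂μ from rfl,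
    ← mul_sub, abs_mul, abs_of_nonneg (by positivity : (0:ℝ) ≤ 1 / (n:ℝ))]
  calc (1 / (n:ℝ)) * |∫ ω, L ω ∂μ - ∫ ω, LP ω ∂μ|
      ≤ (1 / (n:ℝ)) * (3 * Real.sqrt sn * K₁ * (n * Mabs) + n * ((27/2) * sn * K₁ ^ 2)) := by
        rw [← hBI]
        exact mul_le_mul_of_nonneg_left hdiff (by positivity)
    _ = 3 * K₁ * Mabs * Real.sqrt sn + (27/2) * K₁ ^ 2 * sn := by
        field_simp

end KeyEst

lemma meas_FEpert {𝒴 : Type*} [MeasurableSpace 𝒴] (n : ℕ) (P : Measure (Fin n → ℝ))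
    [IsProbabilityMeasure P] (W : (Fin n → ℝ) → 𝒴 → ℝ)
    (ν : Measure ((Fin n → ℝ) × 𝒴)) [IsProbabilityMeasure ν]
    (hWmeas : Measurable fun p : (Fin n → ℝ) × 𝒴 => W p.1 p.2) (sn : ℝ) :
    Measurable (fun a : ℝ => FEpert n P W ν sn a) := by
  have hG : Measurable (fun q : ℝ × (((Fin n → ℝ) × 𝒴) × (Fin n → ℝ)) =>
      Real.log (Zpert n P W sn q.1 q.2)) :=
    Real.measurable_log.comp (meas_Zpert_joint n P W hWmeas sn)
  have : Measurable (fun a : ℝ =>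
      ∫ ω, Real.log (Zpert n P W sn a ω) ∂(pertSpace n ν)) :=
    hG.stronglyMeasurable.integral_prod_right'.measurable
  exact this.const_mul _


/-- **Vanishing effect of the perturbation on the free energy.**  If `sₙ → 0` then
`|F_n − F_n^{(pert)}(a)| → 0` uniformly in `a ∈ [1/2,3]`, and consequently
`|F_n − ∫₁² F_n^{(pert)}(a) da| → 0`. -/
theorem perturbed_free_energy_vanishes
    {𝒴 : ℕ → Type*} [∀ n, MeasurableSpace (𝒴 n)]
    (K₁ : ℝ) (hK₁ : 0 < K₁)
    (P₁ : ∀ n, Measure (Fin n → ℝ)) [∀ n, IsProbabilityMeasure (P₁ n)]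
    (ν : ∀ n, Measure ((Fin n → ℝ) × 𝒴 n)) [∀ n, IsProbabilityMeasure (ν n)]
    (W : ∀ n, (Fin n → ℝ) → 𝒴 n → ℝ)
    (hWmeas : ∀ n, Measurable fun p : (Fin n → ℝ) × 𝒴 n => W n p.1 p.2)
    (hWpos : ∀ n x y, 0 ≤ W n x y)
    (hmarg : ∀ n, (ν n).map Prod.fst = P₁ n)
    (hsupp : ∀ n, ∀ᵐ x ∂(P₁ n), ∀ i, |x i| ≤ K₁)
    (hZint : ∀ n, Integrable (fun y => ∫ x, W n x y ∂(P₁ n)) ((ν n).map Prod.snd))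
    (hlogZint : ∀ n,
      Integrable (fun y => Real.log (∫ x, W n x y ∂(P₁ n))) ((ν n).map Prod.snd))
    (hcond : ∀ n (f : (Fin n → ℝ) × 𝒴 n → ℝ), Measurable f → (∃ C : ℝ, ∀ p, |f p| ≤ C) →
      ∫ p, f p ∂(ν n)
        = ∫ y, (∫ x, f (x, y) * W n x y ∂(P₁ n)) / (∫ x, W n x y ∂(P₁ n))
            ∂((ν n).map Prod.snd))
    (s : ℕ → ℝ) (hs : ∀ n, s n ∈ Set.Ioc (0 : ℝ) 1)
    (hs0 : Tendsto s atTop (𝓝 0)) :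
    (∀ ε > (0 : ℝ), ∃ N : ℕ, ∀ n ≥ N, ∀ a ∈ Set.Icc (1 / 2 : ℝ) 3,
        |FEgen n (P₁ n) (W n) (ν n) - FEpert n (P₁ n) (W n) (ν n) (s n) a| < ε)
    ∧ Tendsto
        (fun n => |FEgen n (P₁ n) (W n) (ν n)
          - ∫ a in (1 : ℝ)..2, FEpert n (P₁ n) (W n) (ν n) (s n) a|)
        atTop (𝓝 0) := by
  set ε : ℕ → ℝ := fun n => 3 * K₁ * Mabs * Real.sqrt (s n) + (27/2) * K₁ ^ 2 * s n
    with hε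
  have hbound : ∀ n, ∀ a ∈ Set.Icc (1/2 : ℝ) 3,
      |FEgen n (P₁ n) (W n) (ν n) - FEpert n (P₁ n) (W n) (ν n) (s n) a| ≤ ε n :=
    fun n a ha => key_est n (P₁ n) (W n) (ν n) (hWmeas n) (hWpos n) (hmarg n) hK₁
      (hsupp n) (hlogZint n) (hs n) ha
  have hε0 : Tendsto ε atTop (𝓝 0) := by
    have hsq : Tendsto (fun n => Real.sqrt (s n)) atTop (𝓝 0) := by
      have := (Real.continuous_sqrt.tendsto 0).comp hs0
      simpa [Function.comp_def] using this
    have h1 : Tendsto (fun n => 3 * K₁ * Mabs * Real.sqrt (s n)) atTop (𝓝 0) := by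
      simpa using hsq.const_mul (3 * K₁ * Mabs)
    have h2 : Tendsto (fun n => (27/2) * K₁ ^ 2 * s n) atTop (𝓝 0) := by
      simpa using hs0.const_mul ((27/2) * K₁ ^ 2)
    simpa using h1.add h2
  constructor
  · intro δ hδ
    have : ∀ᶠ n in atTop, ε n < δ := hε0.eventually_lt_const hδ
    obtain ⟨N, hN⟩ := eventually_atTop.mp this
    exact ⟨N, fun n hn a ha => lt_of_le_of_lt (hbound n a ha) (hN n hn)⟩
  · have hbound2 : ∀ n,
        |FEgen n (P₁ n) (W n) (ν n)
          - ∫ a in (1:ℝ)..2, FEpert n (P₁ n) (W n) (ν n) (s n) a| ≤ ε n := by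
      intro n
      have hIcc : Set.uIoc (1:ℝ) 2 ⊆ Set.Icc (1/2 : ℝ) 3 := by
        rw [Set.uIoc_of_le (by norm_num : (1:ℝ) ≤ 2)]
        intro a ha
        exact ⟨by linarith [ha.1], by linarith [ha.2]⟩
      have hεn0 : 0 ≤ ε n := by
        have h0 := (hbound n 1 (by norm_num)).trans' (abs_nonneg _)
        linarith [abs_nonneg (FEgen n (P₁ n) (W n) (ν n)
          - FEpert n (P₁ n) (W n) (ν n) (s n) 1)]
      have hmeas : Measurable (fun a : ℝ => FEpert n (P₁ n) (W n) (ν n) (s n) a) :=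
        meas_FEpert n (P₁ n) (W n) (ν n) (hWmeas n) (s n)
      have hII : IntervalIntegrable (fun a => FEpert n (P₁ n) (W n) (ν n) (s n) a)
          volume 1 2 := by
        rw [intervalIntegrable_iff, Set.uIoc_of_le (by norm_num : (1:ℝ) ≤ 2)]
        refine Integrable.mono' (g := fun _ => |FEgen n (P₁ n) (W n) (ν n)| + ε n)
          (integrableOn_const measure_Ioc_lt_top.ne) ?_ ?_
        · exact hmeas.aestronglyMeasurable.restrict
        · refine (ae_restrict_iff' measurableSet_Ioc).mpr ?_
          filter_upwards with a ha
          have h := hbound n a ⟨by linarith [ha.1], by linarith [ha.2]⟩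
          rw [Real.norm_eq_abs]
          have := abs_sub_abs_le_abs_sub (FEpert n (P₁ n) (W n) (ν n) (s n) a)
            (FEgen n (P₁ n) (W n) (ν n))
          rw [abs_sub_comm] at this
          linarith
      have heq : FEgen n (P₁ n) (W n) (ν n)
          - ∫ a in (1:ℝ)..2, FEpert n (P₁ n) (W n) (ν n) (s n) a
          = ∫ a in (1:ℝ)..2,
              (FEgen n (P₁ n) (W n) (ν n) - FEpert n (P₁ n) (W n) (ν n) (s n) a) := by
        rw [intervalIntegral.integral_sub intervalIntegrable_const hII,
          intervalIntegral.integral_const]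
        norm_num
      rw [heq]
      have := intervalIntegral.norm_integral_le_of_norm_le_const
        (C := ε n) (a := (1:ℝ)) (b := 2)
        (f := fun a => FEgen n (P₁ n) (W n) (ν n) - FEpert n (P₁ n) (W n) (ν n) (s n) a)
        (fun a ha => by rw [Real.norm_eq_abs]; exact hbound n a (hIcc ha))
      rw [Real.norm_eq_abs, show |(2:ℝ) - 1| = 1 by norm_num, mul_one] at this
      exact this
    refine squeeze_zero (fun n => abs_nonneg _) hbound2 hε0
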